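/- Let M > 0, q, 𝔞, y, z be real numbers with q² + 𝔞² < M², z² ≤ 𝔞², and y > M + √(M² − q² − 𝔞²). Then (My − q²)·y − M·z² > y·(𝔞² − z²). In particular (My − q²)·y − M·z² > 0. -/
import Mathlib

/-- Key algebraic inequality for the `T`-conditional pseudo-convexity of `y`:
in the non-extremal regime, for `z² ≤ 𝔞²` and `y > y_+`,
`(My − q²)y − Mz² > y(𝔞² − z²)` (hence is positive). -/
theorem stmt11 (M q a y z : ℝ) (hM : 0 < M) (hne : q ^ 2 + a ^ 2 < M ^ 2)
    (hz : z ^ 2 ≤ a ^ 2) (hy : M + Real.sqrt (M ^ 2 - q ^ 2 - a ^ 2) < y) :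
    (M * y - q ^ 2) * y - M * z ^ 2 > y * (a ^ 2 - z ^ 2) ∧
    (M * y - q ^ 2) * y - M * z ^ 2 > 0 := by
  have hs : Real.sqrt (M ^ 2 - q ^ 2 - a ^ 2) ≥ 0 := Real.sqrt_nonneg _
  have hyM : M < y := by linarith
  have h1 : (M * y - q ^ 2) * y - M * z ^ 2 > y * (a ^ 2 - z ^ 2) := by
    nlinarith [mul_pos hM (sub_pos.2 hyM), mul_nonneg (sub_nonneg.2 hyM.le) (sq_nonneg z)]
  refine ⟨h1, ?_⟩
  nlinarith [mul_nonneg (le_of_lt (lt_trans hM hyM)) (sub_nonneg.2 hz)]
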